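/- Let ε(d,k) denote the infimum of d(P,Q) over all pairs of disjoint nonempty lattice polytopes P,Q contained in [0,k]^d. Then for every fixed k ≥ 1 and every d ≥ 2, ε(d,k) < ε(d−1,k); that is, ε(d,k) is strictly decreasing in d. -/

import Mathlib

/-- A lattice (d,k)-polytope: the convex hull of a finite nonempty set of integer
points contained in the hypercube [0,k]^d. -/
def IsLatticePolytope (d k : ℕ) (P : Set (EuclideanSpace ℝ (Fin d))) : Prop :=
  ∃ V : Finset (EuclideanSpace ℝ (Fin d)), V.Nonempty ∧
    (∀ v ∈ V, ∀ i, (∃ z : ℤ, v i = z) ∧ 0 ≤ v i ∧ v i ≤ k) ∧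
    P = convexHull ℝ (V : Set (EuclideanSpace ℝ (Fin d)))

/-- ε(d,k): the smallest possible distance between two disjoint lattice
(d,k)-polytopes. -/
noncomputable def eps (d k : ℕ) : ℝ :=
  sInf {r | ∃ P Q : Set (EuclideanSpace ℝ (Fin d)),
    IsLatticePolytope d k P ∧ IsLatticePolytope d k Q ∧ P ∩ Q = ∅ ∧
    r = sInf (Set.image2 dist P Q)}

namespace Stmt6Aux

open Finset

/-- The set whose infimum is `eps`. -/
def Sset (d k : ℕ) : Set ℝ :=
  {r | ∃ P Q : Set (EuclideanSpace ℝ (Fin d)),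
    IsLatticePolytope d k P ∧ IsLatticePolytope d k Q ∧ P ∩ Q = ∅ ∧
    r = sInf (Set.image2 dist P Q)}

lemma eps_eq (d k : ℕ) : eps d k = sInf (Sset d k) := rfl

lemma Sset_nonneg {d k : ℕ} {r : ℝ} (hr : r ∈ Sset d k) : 0 ≤ r := by
  obtain ⟨P, Q, -, -, -, rfl⟩ := hr
  apply Real.sInf_nonneg
  rintro x ⟨a, -, b, -, rfl⟩
  exact dist_nonneg

lemma Sset_bddBelow (d k : ℕ) : BddBelow (Sset d k) :=
  ⟨0, fun _ hr => Sset_nonneg hr⟩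

lemma sum_apply' {m : ℕ} {α : Type*} (s : Finset α)
    (f : α → EuclideanSpace ℝ (Fin m)) (i : Fin m) :
    (∑ a ∈ s, f a) i = ∑ a ∈ s, f a i := by
  classical
  induction s using Finset.induction_on with
  | empty => simp [PiLp.zero_apply]
  | insert _ _ h ih => rw [Finset.sum_insert h, Finset.sum_insert h, PiLp.add_apply, ih]

lemma Sset_finite (n k : ℕ) : (Sset n k).Finite := by
  classical
  set L : Finset (EuclideanSpace ℝ (Fin n)) :=
    Finset.image
      (fun f : Fin n → Fin (k+1) => (WithLp.toLp 2 (fun i => ((f i : ℕ) : ℝ)) : EuclideanSpace ℝ (Fin n)))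
      Finset.univ with hL
  have hsub : Sset n k ⊆
      (fun p : Finset (EuclideanSpace ℝ (Fin n)) × Finset (EuclideanSpace ℝ (Fin n)) =>
        sInf (Set.image2 dist (convexHull ℝ (p.1 : Set (EuclideanSpace ℝ (Fin n))))
          (convexHull ℝ (p.2 : Set (EuclideanSpace ℝ (Fin n)))))) ''
      ((L.powerset ×ˢ L.powerset : Finset _) : Set _) := by
    rintro r ⟨P, Q, ⟨V, hVne, hVlat, rfl⟩, ⟨W, hWne, hWlat, rfl⟩, hdisj, rfl⟩
    have hmemL : ∀ (v : EuclideanSpace ℝ (Fin n)),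
        (∀ i, (∃ z : ℤ, v i = z) ∧ 0 ≤ v i ∧ v i ≤ k) → v ∈ L := by
      intro v hv
      have hz : ∀ i : Fin n, ∃ z : ℤ, v i = z ∧ 0 ≤ z ∧ z ≤ k := by
        intro i
        obtain ⟨⟨z, hz⟩, h0, hk⟩ := hv i
        refine ⟨z, hz, ?_, ?_⟩
        · rw [hz] at h0; simpa using h0
        · rw [hz] at hk; exact (Int.cast_le (R := ℝ)).mp (by simpa using hk)
      choose z hz h0 hk using hz
      refine Finset.mem_image.2 ⟨fun i => ⟨(z i).toNat, ?_⟩, Finset.mem_univ _, ?_⟩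
      · have h1 := h0 i
        have h2 := hk i
        omega
      · ext i
        have : (((z i).toNat : ℕ) : ℝ) = ((z i : ℤ) : ℝ) := by
          have := Int.toNat_of_nonneg (h0 i)
          exact_mod_cast congrArg (fun t : ℤ => (t : ℝ)) this
        simp only [this]
        exact (hz i).symm
    refine ⟨(V, W), ?_, rfl⟩
    simp only [Finset.coe_product, Set.mem_prod, Finset.mem_coe, Finset.mem_powerset]
    constructor
    · intro v hv; exact hmemL v (hVlat v hv)
    · intro v hv; exact hmemL v (hWlat v hv)
  exact Set.Finite.subset (Set.Finite.image _ (Finset.finite_toSet _)) hsub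

lemma Sset_nonempty (n k : ℕ) (hn : 1 ≤ n) (hk : 1 ≤ k) : (Sset n k).Nonempty := by
  classical
  set a : EuclideanSpace ℝ (Fin n) := WithLp.toLp 2 (fun _ => (0:ℝ))
  set b : EuclideanSpace ℝ (Fin n) := WithLp.toLp 2 (fun _ => (k:ℝ))
  have hab : a ≠ b := by
    intro h
    have := congrArg (fun z : EuclideanSpace ℝ (Fin n) => z ⟨0, hn⟩) h
    simp only [a, b] at this
    have : (0:ℝ) = k := this
    have : (k:ℕ) = 0 := by exact_mod_cast this.symm
    omega
  refine ⟨_, convexHull ℝ (↑({a} : Finset _)), convexHull ℝ (↑({b} : Finset _)),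
    ⟨{a}, Finset.singleton_nonempty _, ?_, rfl⟩,
    ⟨{b}, Finset.singleton_nonempty _, ?_, rfl⟩, ?_, rfl⟩
  · intro v hv i
    rw [Finset.mem_singleton] at hv
    subst hv
    have ha : a i = 0 := rfl
    rw [ha]
    exact ⟨⟨0, by norm_num⟩, le_refl _, by positivity⟩
  · intro v hv i
    rw [Finset.mem_singleton] at hv
    subst hv
    have hb : b i = k := rfl
    rw [hb]
    exact ⟨⟨k, by norm_num⟩, by positivity, le_refl _⟩
  · rw [Finset.coe_singleton, Finset.coe_singleton, convexHull_singleton,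
      convexHull_singleton]
    rw [Set.eq_empty_iff_forall_notMem]
    rintro x ⟨hx1, hx2⟩
    rw [Set.mem_singleton_iff] at hx1 hx2
    exact hab (hx1 ▸ hx2 ▸ rfl)


def emb {n : ℕ} (x : EuclideanSpace ℝ (Fin n)) : EuclideanSpace ℝ (Fin (n+1)) :=
  WithLp.toLp 2 (Fin.snoc (α := fun _ => ℝ) x.ofLp 0)

lemma emb_castSucc {n : ℕ} (x : EuclideanSpace ℝ (Fin n)) (i : Fin n) :
    emb x i.castSucc = x i := Fin.snoc_castSucc (α := fun _ => ℝ) _ _ _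

lemma emb_last {n : ℕ} (x : EuclideanSpace ℝ (Fin n)) :
    emb x (Fin.last n) = 0 := Fin.snoc_last (α := fun _ => ℝ) _ _

lemma emb_injective {n : ℕ} : Function.Injective (emb (n := n)) := by
  intro x y h
  ext i
  have := congrArg (fun z : EuclideanSpace ℝ (Fin (n+1)) => z i.castSucc) h
  simpa [emb_castSucc] using this

def embL (n : ℕ) : EuclideanSpace ℝ (Fin n) →ₗ[ℝ] EuclideanSpace ℝ (Fin (n+1)) where
  toFun := emb
  map_add' x y := by
    ext i
    induction i using Fin.lastCases with
    | last => simp [emb, PiLp.add_apply]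
    | cast j => simp [emb, PiLp.add_apply]
  map_smul' c x := by
    ext i
    induction i using Fin.lastCases with
    | last => simp [emb, PiLp.smul_apply]
    | cast j => simp [emb, PiLp.smul_apply]

lemma emb_image_convexHull {n : ℕ} (s : Set (EuclideanSpace ℝ (Fin n))) :
    emb '' (convexHull ℝ s) = convexHull ℝ (emb '' s) := by
  have h := AffineMap.image_convexHull ((embL n).toAffineMap) s
  have hco : ⇑((embL n).toAffineMap) = emb := rfl
  rw [hco] at h
  exact h

lemma hull_last_eq_zero {n : ℕ} {s : Set (EuclideanSpace ℝ (Fin (n+1)))}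
    (hs : ∀ x ∈ s, x (Fin.last n) = 0) :
    ∀ x ∈ convexHull ℝ s, x (Fin.last n) = 0 := by
  have hconv : Convex ℝ {x : EuclideanSpace ℝ (Fin (n+1)) | x (Fin.last n) = 0} := by
    intro x hx y hy a b _ _ _
    simp only [Set.mem_setOf_eq] at *
    rw [PiLp.add_apply, PiLp.smul_apply, PiLp.smul_apply, hx, hy]
    simp
  exact fun x hx => convexHull_min hs hconv hx

set_option maxHeartbeats 2000000 in
lemma key (n k : ℕ) (hn : 1 ≤ n) (hk : 1 ≤ k) : eps (n+1) k < eps n k := by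
  classical
  have hmem : eps n k ∈ Sset n k := by
    rw [eps_eq]
    exact Set.Nonempty.csInf_mem (Sset_nonempty n k hn hk) (Sset_finite n k)
  obtain ⟨P, Q, ⟨V, hVne, hVlat, hPV⟩, ⟨W, hWne, hWlat, hQW⟩, hdisj, heps⟩ := hmem
  have hPc : IsCompact P := hPV ▸ (V.finite_toSet).isCompact_convexHull (𝕜 := ℝ)
  have hQc : IsCompact Q := hQW ▸ (W.finite_toSet).isCompact_convexHull (𝕜 := ℝ)
  have hPne : P.Nonempty := hPV ▸ convexHull_nonempty_iff.2 (Finset.coe_nonempty.2 hVne)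
  have hQne : Q.Nonempty := hQW ▸ convexHull_nonempty_iff.2 (Finset.coe_nonempty.2 hWne)
  obtain ⟨⟨p, q⟩, hpq, hmin⟩ := (hPc.prod hQc).exists_isMinOn (hPne.prod hQne)
      (continuous_dist.continuousOn)
  obtain ⟨hp, hq⟩ := hpq
  set r := dist p q with hrdef
  have hrInf : sInf (Set.image2 dist P Q) = r := by
    apply le_antisymm
    · exact csInf_le ⟨0, by rintro x ⟨a, -, b, -, rfl⟩; exact dist_nonneg⟩
        (Set.mem_image2_of_mem hp hq)
    · apply le_csInf (Set.Nonempty.image2 hPne hQne)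
      rintro b ⟨x, hx, z, hz, rfl⟩
      exact isMinOn_iff.1 hmin (x, z) (Set.mk_mem_prod hx hz)
  have hrpos : 0 < r := by
    rw [hrdef, dist_pos]
    intro h
    have hpQ : p ∈ Q := by rw [h]; exact hq
    have : p ∈ P ∩ Q := Set.mem_inter hp hpQ
    rw [hdisj] at this
    exact Set.notMem_empty p this
  -- vertex with large inner product
  have hpV : p ∈ convexHull ℝ (V : Set _) := hPV ▸ hp
  rw [Finset.convexHull_eq] at hpV
  obtain ⟨wt, hwt0, hwt1, hcm⟩ := hpV
  have hpsum : p = ∑ y ∈ V, wt y • y := by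
    rw [← hcm, Finset.centerMass_eq_of_sum_1 _ _ hwt1]
    rfl
  have hA : ∑ i, (p i - q i) ^ 2 = r ^ 2 := by
    have h1 : r ^ 2 = ∑ i, dist (p i) (q i) ^ 2 := by
      rw [hrdef, EuclideanSpace.dist_eq]
      exact Real.sq_sqrt (by positivity)
    rw [h1]
    exact Finset.sum_congr rfl fun i _ => by rw [Real.dist_eq, sq_abs]
  have hvert : ∃ v ∈ V, r ^ 2 ≤ ∑ i, (v i - q i) * (p i - q i) := by
    by_contra hcon
    push_neg at hcon
    have hwpos : ∃ v ∈ V, 0 < wt v := by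
      by_contra hc
      push_neg at hc
      have hz : ∑ y ∈ V, wt y = 0 :=
        Finset.sum_eq_zero fun y hy => le_antisymm (hc y hy) (hwt0 y hy)
      rw [hwt1] at hz
      norm_num at hz
    obtain ⟨v₀, hv₀, hv₀pos⟩ := hwpos
    have hu : ∀ i : Fin n, p i - q i = ∑ y ∈ V, wt y * (y i - q i) := by
      intro i
      have h1 : p i = ∑ y ∈ V, wt y * y i := by
        rw [hpsum, sum_apply']
        exact Finset.sum_congr rfl fun y _ => by rw [PiLp.smul_apply, smul_eq_mul]
      have h2 : ∑ y ∈ V, wt y * (y i - q i)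
          = (∑ y ∈ V, wt y * y i) - (∑ y ∈ V, wt y) * q i := by
        rw [Finset.sum_mul, ← Finset.sum_sub_distrib]
        exact Finset.sum_congr rfl fun y _ => by ring
      rw [h2, hwt1, h1]
      ring
    have hsum : ∑ i, (p i - q i) ^ 2
        = ∑ y ∈ V, wt y * (∑ i, (y i - q i) * (p i - q i)) := by
      calc ∑ i, (p i - q i) ^ 2
          = ∑ i, (∑ y ∈ V, wt y * (y i - q i)) * (p i - q i) :=
            Finset.sum_congr rfl fun i _ => by rw [← hu i]; ring
        _ = ∑ i : Fin n, ∑ y ∈ V, wt y * ((y i - q i) * (p i - q i)) :=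
            Finset.sum_congr rfl fun i _ => by
              rw [Finset.sum_mul]
              exact Finset.sum_congr rfl fun y _ => by ring
        _ = ∑ y ∈ V, ∑ i : Fin n, wt y * ((y i - q i) * (p i - q i)) := Finset.sum_comm
        _ = ∑ y ∈ V, wt y * (∑ i, (y i - q i) * (p i - q i)) :=
            Finset.sum_congr rfl fun y _ => by rw [Finset.mul_sum]
    have hlt : ∑ y ∈ V, wt y * (∑ i, (y i - q i) * (p i - q i))
        < ∑ y ∈ V, wt y * r ^ 2 := by
      apply Finset.sum_lt_sum
      · exact fun y hy => mul_le_mul_of_nonneg_left (le_of_lt (hcon y hy)) (hwt0 y hy)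
      · exact ⟨v₀, hv₀, mul_lt_mul_of_pos_left (hcon v₀ hv₀) hv₀pos⟩
    rw [← hsum] at hlt
    rw [← Finset.sum_mul, hwt1, one_mul, hA] at hlt
    exact lt_irrefl _ hlt
  obtain ⟨w, hwV, hwB⟩ := hvert
  -- construction in dimension n+1
  set apex : EuclideanSpace ℝ (Fin (n+1)) := WithLp.toLp 2 (Fin.snoc (α := fun _ => ℝ) w.ofLp (k : ℝ)) with hapex
  have hapex_cast : ∀ i : Fin n, apex i.castSucc = w i := fun i => Fin.snoc_castSucc (α := fun _ => ℝ) _ _ _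
  have hapex_last : apex (Fin.last n) = (k : ℝ) := Fin.snoc_last (α := fun _ => ℝ) _ _
  set V' : Finset (EuclideanSpace ℝ (Fin (n+1))) := V.image emb with hV'
  set G : Finset (EuclideanSpace ℝ (Fin (n+1))) := insert apex (W.image emb) with hG
  set P' : Set (EuclideanSpace ℝ (Fin (n+1))) := convexHull ℝ (V' : Set _) with hP'
  set Q' : Set (EuclideanSpace ℝ (Fin (n+1))) := convexHull ℝ (G : Set _) with hQ'
  have hV'co : (V' : Set (EuclideanSpace ℝ (Fin (n+1)))) = emb '' (V : Set _) := by
    rw [hV', Finset.coe_image]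
  have hGco : (G : Set (EuclideanSpace ℝ (Fin (n+1)))) = insert apex (emb '' (W : Set _)) := by
    rw [hG, Finset.coe_insert, Finset.coe_image]
  have hP'img : P' = emb '' P := by
    rw [hP', hV'co, hPV, emb_image_convexHull]
  have hWQimg : convexHull ℝ (emb '' (W : Set _)) = emb '' Q := by
    rw [hQW, emb_image_convexHull]
  -- lattice conditions
  have hlatV' : ∀ v ∈ V', ∀ i, (∃ z : ℤ, v i = z) ∧ 0 ≤ v i ∧ v i ≤ k := by
    intro v hv i
    obtain ⟨v₀, hv₀, rfl⟩ := Finset.mem_image.1 hv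
    induction i using Fin.lastCases with
    | last =>
      rw [emb_last]
      exact ⟨⟨0, by norm_num⟩, le_refl _, by positivity⟩
    | cast j =>
      rw [emb_castSucc]
      exact hVlat v₀ hv₀ j
  have hlatG : ∀ v ∈ G, ∀ i, (∃ z : ℤ, v i = z) ∧ 0 ≤ v i ∧ v i ≤ k := by
    intro v hv i
    rw [hG, Finset.mem_insert] at hv
    rcases hv with rfl | hv
    · induction i using Fin.lastCases with
      | last =>
        rw [hapex_last]
        exact ⟨⟨k, by norm_num⟩, by positivity, le_refl _⟩
      | cast j =>
        rw [hapex_cast]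
        exact hVlat w hwV j
    · obtain ⟨v₀, hv₀, rfl⟩ := Finset.mem_image.1 hv
      induction i using Fin.lastCases with
      | last =>
        rw [emb_last]
        exact ⟨⟨0, by norm_num⟩, le_refl _, by positivity⟩
      | cast j =>
        rw [emb_castSucc]
        exact hWlat v₀ hv₀ j
  -- disjointness
  have hPlast : ∀ x ∈ P', x (Fin.last n) = 0 := by
    rw [hP', hV'co]
    apply hull_last_eq_zero
    rintro x ⟨v, -, rfl⟩
    exact emb_last v
  have hWimg_ne : (emb '' (W : Set (EuclideanSpace ℝ (Fin n)))).Nonempty :=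
    (Finset.coe_nonempty.2 hWne).image emb
  have hdisj' : P' ∩ Q' = ∅ := by
    rw [Set.eq_empty_iff_forall_notMem]
    rintro x ⟨hxP, hxQ⟩
    have hx0 : x (Fin.last n) = 0 := hPlast x hxP
    rw [hQ', hGco, convexHull_insert hWimg_ne, mem_convexJoin] at hxQ
    obtain ⟨a, ha, b, hb, hseg⟩ := hxQ
    rw [Set.mem_singleton_iff] at ha
    subst ha
    obtain ⟨μ, ν, hμ, hν, hμν, hxe⟩ := hseg
    have hblast : b (Fin.last n) = 0 := by
      rw [hWQimg] at hb
      obtain ⟨z, -, rfl⟩ := hb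
      exact emb_last z
    have hxlast : x (Fin.last n) = μ * k := by
      rw [← hxe, PiLp.add_apply, PiLp.smul_apply, PiLp.smul_apply, smul_eq_mul,
        smul_eq_mul, hblast, hapex_last]
      ring
    have hkpos : (0:ℝ) < k := by exact_mod_cast hk
    have hμ0 : μ = 0 := by
      rw [hx0] at hxlast
      have := hxlast.symm
      rcases mul_eq_zero.1 this with h | h
      · exact h
      · exact absurd h (ne_of_gt hkpos)
    have hν1 : ν = 1 := by rw [hμ0] at hμν; linarith
    have hxb : x = b := by
      rw [← hxe, hμ0, hν1]
      simp
    have hxQ2 : x ∈ emb '' Q := by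
      rw [hxb, ← hWQimg]
      exact hb
    have hxP2 : x ∈ emb '' P := by rw [← hP'img]; exact hxP
    obtain ⟨y1, hy1, hxy1⟩ := hxP2
    obtain ⟨y2, hy2, hxy2⟩ := hxQ2
    have hy12 : y1 = y2 := emb_injective (hxy1.trans hxy2.symm)
    have : y1 ∈ P ∩ Q := Set.mem_inter hy1 (hy12 ▸ hy2)
    rw [hdisj] at this
    exact Set.notMem_empty _ this
  -- the nearby point
  set C : ℝ := (∑ i, (w i - q i) ^ 2) + (k : ℝ) ^ 2 with hC
  have hkpos : (0:ℝ) < k := by exact_mod_cast hk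
  have hCpos : 0 < C := by
    have h1 : (0:ℝ) ≤ ∑ i, (w i - q i) ^ 2 := by positivity
    nlinarith
  set lam : ℝ := min (1/2) (r ^ 2 / (2 * C)) with hlam
  have hlam_pos : 0 < lam := lt_min (by norm_num) (by positivity)
  have hlam_le : lam ≤ 1 := le_trans (min_le_left _ _) (by norm_num)
  have hlamC : lam * C ≤ r ^ 2 / 2 := by
    have h1 : lam ≤ r ^ 2 / (2 * C) := min_le_right _ _
    have h2 : lam * C ≤ (r ^ 2 / (2 * C)) * C :=
      mul_le_mul_of_nonneg_right h1 (le_of_lt hCpos)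
    have h3 : (r ^ 2 / (2 * C)) * C = r ^ 2 / 2 := by
      field_simp
    linarith
  set y : EuclideanSpace ℝ (Fin (n+1)) := lam • apex + (1 - lam) • emb q with hy
  have hapexQ' : apex ∈ Q' := by
    rw [hQ']
    exact subset_convexHull ℝ _ (by rw [hGco]; exact Set.mem_insert _ _)
  have hembqQ' : emb q ∈ Q' := by
    rw [hQ', hGco]
    apply convexHull_mono (Set.subset_insert _ _)
    rw [hWQimg]
    exact Set.mem_image_of_mem emb hq
  have hyQ' : y ∈ Q' := by
    rw [hy]
    exact (convex_convexHull ℝ _) hapexQ' hembqQ' (le_of_lt hlam_pos)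
      (by linarith) (by ring)
  have hembpP' : emb p ∈ P' := by
    rw [hP'img]
    exact Set.mem_image_of_mem emb hp
  -- distance estimate
  have hd : dist (emb p) y ^ 2
      = (∑ i, ((p i - q i) - lam * (w i - q i)) ^ 2) + lam ^ 2 * (k : ℝ) ^ 2 := by
    rw [EuclideanSpace.dist_eq, Real.sq_sqrt (by positivity), Fin.sum_univ_castSucc]
    congr 1
    · refine Finset.sum_congr rfl fun i _ => ?_
      rw [Real.dist_eq, sq_abs]
      have h1 : emb p i.castSucc = p i := emb_castSucc p i
      have h2 : y i.castSucc = lam * w i + (1 - lam) * q i := by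
        rw [hy, PiLp.add_apply, PiLp.smul_apply, PiLp.smul_apply, smul_eq_mul,
          smul_eq_mul, hapex_cast, emb_castSucc]
      rw [h1, h2]
      ring
    · rw [Real.dist_eq, sq_abs]
      have h1 : emb p (Fin.last n) = 0 := emb_last p
      have h2 : y (Fin.last n) = lam * k := by
        rw [hy, PiLp.add_apply, PiLp.smul_apply, PiLp.smul_apply, smul_eq_mul,
          smul_eq_mul, hapex_last, emb_last]
        ring
      rw [h1, h2]
      ring
  have hexp : dist (emb p) y ^ 2
      = r ^ 2 - 2 * lam * (∑ i, (w i - q i) * (p i - q i)) + lam ^ 2 * C := by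
    rw [hd, hC]
    have h1 : ∑ i, ((p i - q i) - lam * (w i - q i)) ^ 2
        = (∑ i, (p i - q i) ^ 2) - 2 * lam * (∑ i, (w i - q i) * (p i - q i))
          + lam ^ 2 * (∑ i, (w i - q i) ^ 2) := by
      rw [Finset.mul_sum, Finset.mul_sum, ← Finset.sum_sub_distrib, ← Finset.sum_add_distrib]
      exact Finset.sum_congr rfl fun i _ => by ring
    rw [h1, hA]
    ring
  have hlt2 : dist (emb p) y ^ 2 < r ^ 2 := by
    rw [hexp]
    have h1 : lam * (lam * C) ≤ lam * (r ^ 2 / 2) :=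
      mul_le_mul_of_nonneg_left hlamC (le_of_lt hlam_pos)
    have h2 : lam * r ^ 2 ≤ lam * (∑ i, (w i - q i) * (p i - q i)) :=
      mul_le_mul_of_nonneg_left hwB (le_of_lt hlam_pos)
    have h3 : 0 < lam * r ^ 2 := by positivity
    nlinarith
  have hdistlt : dist (emb p) y < r := by
    nlinarith [dist_nonneg (x := emb p) (y := y)]
  -- conclusion
  have h1 : sInf (Set.image2 dist P' Q') ≤ dist (emb p) y :=
    csInf_le ⟨0, by rintro x ⟨a, -, b, -, rfl⟩; exact dist_nonneg⟩
      (Set.mem_image2_of_mem hembpP' hyQ')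
  have h2 : eps (n+1) k ≤ sInf (Set.image2 dist P' Q') := by
    rw [eps_eq]
    apply csInf_le (Sset_bddBelow _ _)
    exact ⟨P', Q', ⟨V', hVne.image emb, hlatV', hP'⟩,
      ⟨G, Finset.insert_nonempty _ _, hlatG, hQ'⟩, hdisj', rfl⟩
  have h3 : r = eps n k := by rw [heps, hrInf]
  calc eps (n+1) k ≤ sInf (Set.image2 dist P' Q') := h2
    _ ≤ dist (emb p) y := h1
    _ < r := hdistlt
    _ = eps n k := h3

end Stmt6Aux


/-- for every fixed k ≥ 1 and every d ≥ 2, ε(d,k) < ε(d-1,k);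
that is, ε(d,k) is strictly decreasing in d. -/
theorem stmt_6 (k : ℕ) (hk : 1 ≤ k) (d : ℕ) (hd : 2 ≤ d) :
    eps d k < eps (d - 1) k := by
  obtain ⟨n, rfl⟩ : ∃ n, d = n + 1 := ⟨d - 1, by omega⟩
  have hn : 1 ≤ n := by omega
  simpa using Stmt6Aux.key n k hn hk
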